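/- Let G be a graph with a tree-partition D = (T, B) of adhesion at most k. If θ_{k+1} is an immersion of G, then θ_{k+1} is an immersion of some torso Z_t of D. -/

import Mathlib

/-- A walk in a multigraph given by its endpoint function `ends`:
`IsWalk ends u w l` means `l` is the list of edges of a walk from `u` to `w`. -/
inductive IsWalk {V E : Type*} (ends : E → Sym2 V) : V → V → List E → Prop
  | nil (v : V) : IsWalk ends v v []
  | cons {u v w : V} {e : E} {l : List E} :
      ends e = s(u, v) → IsWalk ends v w l → IsWalk ends u w (e :: l)

/-- `EdgeSep ends s x S A` : the edge set `A` meets every walk of length at most `s`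
from `x` to a vertex of `S`. -/
def EdgeSep {V E : Type*} (ends : E → Sym2 V) (s : ℕ∞) (x : V) (S : Set V) (A : Set E) : Prop :=
  ∀ y ∈ S, ∀ l : List E, IsWalk ends x y l → (l.length : ℕ∞) ≤ s → ∃ e ∈ l, e ∈ A

/-- A `(k,s)`-edge-hide-out: every edge set separating a vertex `x ∈ R` from `R \ {x}`
(at distance `s`) has at least `k` edges. -/
def IsHideout {V E : Type*} (ends : E → Sym2 V) (s : ℕ∞) (k : ℕ) (R : Set V) : Prop :=
  ∀ x ∈ R, ∀ A : Set E, EdgeSep ends s x (R \ {x}) A → k ≤ A.ncard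

/-- `G` admits a layout of `s`-edge-degeneracy at most `k`. -/
def LayoutWidthLE {V E : Type*} (ends : E → Sym2 V) (s : ℕ∞) (k : ℕ) : Prop :=
  ∃ (n : ℕ) (L : Fin n ≃ V), ∀ i : Fin n,
    ∃ A : Set E, A.ncard ≤ k ∧ EdgeSep ends s (L i) {v | ∃ j, j < i ∧ L j = v} A

/-- The `s`-edge-degeneracy `δ_e^s(G)`. -/
noncomputable def edgeDeg {V E : Type*} (ends : E → Sym2 V) (s : ℕ∞) : ℕ :=
  sInf {k | LayoutWidthLE ends s k}

/-- The edge-degree of a vertex (parallel edges counted with multiplicity). -/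
noncomputable def degE {V E : Type*} (ends : E → Sym2 V) (v : V) : ℕ :=
  {e : E | v ∈ ends e}.ncard
/-- The multigraph `θ_k`: two vertices joined by `k` parallel edges. -/
def thetaEnds (k : ℕ) : Fin k → Sym2 (Fin 2) := fun _ => s(0, 1)

/-- `H` is an immersion of `G`: an injection of the vertices of `H` into those of `G`
together with pairwise edge-disjoint trails of `G` realizing the edges of `H`. -/
def Immersion {V' E' V E : Type*} (ends' : E' → Sym2 V') (ends : E → Sym2 V) : Prop :=
  ∃ (φ : V' ↪ V) (P : E' → List E),
    (∀ e : E', ∃ u v : V', ends' e = s(u, v) ∧ IsWalk ends (φ u) (φ v) (P e) ∧ (P e).Nodup) ∧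
    ∀ e f : E', e ≠ f → ∀ x ∈ P e, x ∉ P f

/-- The neighbour of `t` towards `x` in the tree `T`: the second vertex of the unique
path from `t` to `x`. -/
noncomputable def towards {τ : Type*} (T : SimpleGraph τ) (hT : T.IsTree) (t x : τ) : τ :=
  ((hT.existsUnique_path t x).choose).getVert 1

/- The vertex map defining the `t`-torso of the tree-partition `β : V → τ`:
vertices of the bag of `t` are kept, all other vertices are identified with the
satellite corresponding to the component of `T ∖ t` containing their bag. -/
open Classical in
noncomputable def torsoMap {V τ : Type*} (T : SimpleGraph τ) (hT : T.IsTree) (β : V → τ)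
    (t : τ) : V → V ⊕ τ :=
  fun v => if β v = t then Sum.inl v else Sum.inr (towards T hT t (β v))

/-- The edges of the `t`-torso: edges of `G` whose two endpoints are not identified. -/
def torsoEdges {V E τ : Type*} (ends : E → Sym2 V) (T : SimpleGraph τ) (hT : T.IsTree)
    (β : V → τ) (t : τ) : Set E :=
  {e : E | ¬ ((ends e).map (torsoMap T hT β t)).IsDiag}

/-- The endpoint function of the `t`-torso `Z_t`. -/
noncomputable def torsoEnds {V E τ : Type*} (ends : E → Sym2 V) (T : SimpleGraph τ)
    (hT : T.IsTree) (β : V → τ) (t : τ) :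
    torsoEdges ends T hT β t → Sym2 (V ⊕ τ) :=
  fun e => (ends e.1).map (torsoMap T hT β t)

/-- The degree of a vertex of the `t`-torso. -/
noncomputable def torsoDeg {V E τ : Type*} (ends : E → Sym2 V) (T : SimpleGraph τ)
    (hT : T.IsTree) (β : V → τ) (t : τ) (w : V ⊕ τ) : ℕ :=
  {e : torsoEdges ends T hT β t | w ∈ torsoEnds ends T hT β t e}.ncard

/-- The side of `a` in the bipartition of the tree `T` obtained by deleting the edge `ab`. -/
def treeSide {τ : Type*} (T : SimpleGraph τ) (a b : τ) : Set τ :=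
  {x | (T.deleteEdges {s(a, b)}).Reachable a x}

/-- The tree-partition `β` of `G` has adhesion at most `k`: for every tree edge `ab`,
at most `k` edges of `G` cross the corresponding bipartition of `V(G)`. -/
def AdhesionLE {V E τ : Type*} (ends : E → Sym2 V) (T : SimpleGraph τ) (β : V → τ)
    (k : ℕ) : Prop :=
  ∀ a b : τ, T.Adj a b →
    {e : E | ∃ u v, ends e = s(u, v) ∧ β u ∈ treeSide T a b ∧ β v ∉ treeSide T a b}.ncard ≤ k

open Classical in
lemma walk_project {V E τ : Type*} (ends : E → Sym2 V) (T : SimpleGraph τ) (hT : T.IsTree)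
    (β : V → τ) (t : τ) {a b : V} {l : List E} (h : IsWalk ends a b l) :
    ∃ l' : List (torsoEdges ends T hT β t),
      IsWalk (torsoEnds ends T hT β t) (torsoMap T hT β t a) (torsoMap T hT β t b) l' ∧
      List.Sublist (l'.map Subtype.val) l := by
  induction h with
  | nil v => exact ⟨[], IsWalk.nil _, List.nil_sublist _⟩
  | @cons u v w e l he _ ih =>
    obtain ⟨l', hw, hs⟩ := ih
    by_cases hd : torsoMap T hT β t u = torsoMap T hT β t v
    · exact ⟨l', hd ▸ hw, hs.trans (List.sublist_cons_self e l)⟩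
    · have hmem : e ∈ torsoEdges ends T hT β t := by
        simp only [torsoEdges, Set.mem_setOf_eq, he, Sym2.map_pair_eq, Sym2.mk_isDiag_iff]
        exact hd
      refine ⟨⟨e, hmem⟩ :: l', IsWalk.cons ?_ hw, hs.cons₂ e⟩
      simp only [torsoEnds, he, Sym2.map_pair_eq]

/-- if `G` has a tree-partition of adhesion at most `k` and `θ_{k+1}` is an
immersion of `G`, then `θ_{k+1}` is an immersion of some torso `Z_t`. -/
theorem theta_immersion_of_torso {V E τ : Type*} [Finite V] [Finite E] [Finite τ]
    (ends : E → Sym2 V) (hloopless : ∀ e, ¬ (ends e).IsDiag)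
    (T : SimpleGraph τ) (hT : T.IsTree) (β : V → τ) (k : ℕ)
    (hadh : AdhesionLE ends T β k)
    (him : Immersion (thetaEnds (k + 1)) ends) :
    ∃ t : τ, Immersion (thetaEnds (k + 1)) (torsoEnds ends T hT β t) := by
  classical
  obtain ⟨φ, P, hP, hdisj⟩ := him
  set t := β (φ 0) with ht
  refine ⟨t, ?_⟩
  have key : ∀ e : Fin (k + 1), ∃ (u v : Fin 2)
      (l' : List (torsoEdges ends T hT β t)),
      thetaEnds (k + 1) e = s(u, v) ∧
      IsWalk (torsoEnds ends T hT β t) (torsoMap T hT β t (φ u)) (torsoMap T hT β t (φ v)) l' ∧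
      l'.Nodup ∧ ∀ x ∈ l', x.1 ∈ P e := by
    intro e
    obtain ⟨u, v, heq, hwalk, hnodup⟩ := hP e
    obtain ⟨l', hw, hs⟩ := walk_project ends T hT β t hwalk
    refine ⟨u, v, l', heq, hw, ?_, fun x hx => hs.subset (List.mem_map_of_mem hx)⟩
    exact (hs.nodup hnodup).of_map _
  choose u v L h1 h2 h3 h4 using key
  have hne : torsoMap T hT β t (φ 0) ≠ torsoMap T hT β t (φ 1) := by
    have h01 : φ 0 ≠ φ 1 := fun h => by simpa using φ.injective h
    simp only [torsoMap, ← ht, if_pos rfl]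
    by_cases hb : β (φ 1) = t
    · rw [if_pos hb]; simpa using h01
    · rw [if_neg hb]; simp
  refine ⟨⟨fun i => torsoMap T hT β t (φ i), ?_⟩, L, ?_, ?_⟩
  · intro i j hij
    fin_cases i <;> fin_cases j <;> first | rfl | exact absurd hij hne | exact absurd hij.symm hne
  · intro e
    exact ⟨u e, v e, h1 e, h2 e, h3 e⟩
  · intro e f hef x hx hxf
    exact hdisj e f hef x.1 (h4 e x hx) (h4 f x hxf)
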